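/- Fix r > 0 and 0 < τ < 2π, and for c ∈ ℝ set β_c := √(c²r² + 1/4). Define h_a : ℝ → ℂ by h_a(c) := cos(β_c τ) + (i/(2β_c))·sin(β_c τ) − cos(crτ), and h_b : ℝ → ℂ by h_b(c) := (cr/β_c)·sin(β_c τ) − sin(crτ). Then h_a(c) → 0 and h_b(c) → 0 as c → ±∞ (so both functions vanish at infinity), and h_a(c) ≠ 0 for every c ∈ ℝ. -/

import Mathlib

open Real Filter

lemma cos_lip' (a b : ℝ) : |Real.cos a - Real.cos b| ≤ |a - b| := by
  rw [Real.cos_sub_cos]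
  have h1 : |Real.sin ((a+b)/2)| ≤ 1 := abs_le.2 ⟨Real.neg_one_le_sin _, Real.sin_le_one _⟩
  have h2 : |Real.sin ((a-b)/2)| ≤ |(a-b)/2| := Real.abs_sin_le_abs
  rw [abs_mul, abs_mul]
  have h3 : |(a-b)/2| = |a-b|/2 := by rw [abs_div]; norm_num
  calc |(-2:ℝ)| * |Real.sin ((a+b)/2)| * |Real.sin ((a-b)/2)|
      ≤ 2 * 1 * (|a-b|/2) := by rw [← h3]; gcongr <;> norm_num
    _ = |a-b| := by ring

lemma sin_lip' (a b : ℝ) : |Real.sin a - Real.sin b| ≤ |a - b| := by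
  rw [Real.sin_sub_sin]
  have h1 : |Real.cos ((a+b)/2)| ≤ 1 := Real.abs_cos_le_one _
  have h2 : |Real.sin ((a-b)/2)| ≤ |(a-b)/2| := Real.abs_sin_le_abs
  rw [abs_mul, abs_mul]
  have h3 : |(a-b)/2| = |a-b|/2 := by rw [abs_div]; norm_num
  calc |(2:ℝ)| * |Real.sin ((a-b)/2)| * |Real.cos ((a+b)/2)|
      ≤ 2 * (|a-b|/2) * 1 := by rw [← h3]; gcongr <;> norm_num
    _ = |a-b| := by ring

lemma beta_facts (r : ℝ) (hr : 0 < r) (c : ℝ) :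
    0 < Real.sqrt (c^2*r^2 + 1/4) ∧ |c| * r ≤ Real.sqrt (c^2*r^2 + 1/4) ∧
    (1:ℝ)/2 ≤ Real.sqrt (c^2*r^2 + 1/4) ∧
    Real.sqrt (c^2*r^2 + 1/4) - |c| * r ≤ 1/(4*Real.sqrt (c^2*r^2 + 1/4)) := by
  set β := Real.sqrt (c^2*r^2 + 1/4) with hβ
  have hsq : β^2 = c^2*r^2 + 1/4 := Real.sq_sqrt (by positivity)
  have hpos : 0 < β := Real.sqrt_pos.2 (by positivity)
  have hge : |c| * r ≤ β := by nlinarith [abs_nonneg c, sq_abs c, hr.le]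
  refine ⟨hpos, hge, ?_, ?_⟩
  · nlinarith
  · rw [le_div_iff₀ (by positivity)]
    nlinarith [mul_nonneg (mul_nonneg (abs_nonneg c) hr.le) (sub_nonneg.2 hge), sq_abs c]

lemma hb_bound (r τ : ℝ) (hr : 0 < r) (hτ : 0 < τ) (c : ℝ) (hc : 0 ≤ c) :
    |c * r / Real.sqrt (c^2*r^2 + 1/4) * Real.sin (Real.sqrt (c^2*r^2 + 1/4) * τ)
      - Real.sin (c * r * τ)| ≤ (τ + 2) / (4 * Real.sqrt (c^2*r^2 + 1/4)) := by
  obtain ⟨hpos, hge, hhalf, hsub⟩ := beta_facts r hr c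
  rw [abs_of_nonneg hc] at hge hsub
  set β := Real.sqrt (c^2*r^2 + 1/4) with hβ
  set x := c * r / β with hx
  have hx1 : x ≤ 1 := by rw [hx, div_le_one hpos]; exact hge
  have hx0 : 0 ≤ x := by positivity
  have hxb : (1 - x) * β = β - c * r := by rw [hx, sub_mul, one_mul, div_mul_cancel₀ _ hpos.ne']
  have key : x * Real.sin (β*τ) - Real.sin (c*r*τ)
      = x * (Real.sin (β*τ) - Real.sin (c*r*τ)) + (x - 1) * Real.sin (c*r*τ) := by ring
  have h1 : |Real.sin (β*τ) - Real.sin (c*r*τ)| ≤ (β - c*r) * τ := by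
    have := sin_lip' (β*τ) (c*r*τ)
    have h2 : |β*τ - c*r*τ| = (β - c*r)*τ := by
      rw [abs_of_nonneg (by nlinarith)]; ring
    linarith [this.trans_eq h2]
  have h2 : |Real.sin (c*r*τ)| ≤ 1 := abs_le.2 ⟨Real.neg_one_le_sin _, Real.sin_le_one _⟩
  rw [key]
  calc |x * (Real.sin (β*τ) - Real.sin (c*r*τ)) + (x - 1) * Real.sin (c*r*τ)|
      ≤ |x| * |Real.sin (β*τ) - Real.sin (c*r*τ)| + |x-1| * |Real.sin (c*r*τ)| := by
        rw [← abs_mul, ← abs_mul]; exact abs_add_le _ _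
    _ ≤ 1 * ((β - c*r)*τ) + (1 - x) * 1 := by
        refine add_le_add (mul_le_mul ?_ h1 (abs_nonneg _) one_pos.le)
          (mul_le_mul ?_ h2 (abs_nonneg _) (by linarith))
        · rw [abs_of_nonneg hx0]; exact hx1
        · rw [abs_sub_comm, abs_of_nonneg (by linarith)]
    _ ≤ (τ + 2) / (4*β) := by
        rw [le_div_iff₀ (by positivity)]
        have h4 : (β - c*r) * (4*β) ≤ 1 := by
          have := mul_le_mul_of_nonneg_right hsub (le_of_lt (by positivity : (0:ℝ) < 4*β))
          calc (β - c*r)*(4*β) ≤ 1/(4*β)*(4*β) := this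
            _ = 1 := by field_simp
        nlinarith [mul_nonneg (sub_nonneg.2 hge) hτ.le, sub_nonneg.2 hx1]

lemma ha_bound (r τ : ℝ) (hr : 0 < r) (hτ : 0 < τ) (c : ℝ) :
    ‖(Real.cos (Real.sqrt (c^2*r^2 + 1/4) * τ) : ℂ)
        + (Complex.I / (2 * (Real.sqrt (c^2*r^2 + 1/4) : ℂ)))
          * (Real.sin (Real.sqrt (c^2*r^2 + 1/4) * τ) : ℂ)
        - (Real.cos (c * r * τ) : ℂ)‖ ≤ (τ + 2) / (4 * Real.sqrt (c^2*r^2 + 1/4)) := by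
  obtain ⟨hpos, hge, hhalf, hsub⟩ := beta_facts r hr c
  set β := Real.sqrt (c^2*r^2 + 1/4) with hβ
  have e1 : (Real.cos (β * τ) : ℂ) + (Complex.I / (2 * (β : ℂ))) * (Real.sin (β * τ) : ℂ)
      - (Real.cos (c * r * τ) : ℂ)
      = ((Real.cos (β * τ) - Real.cos (c * r * τ) : ℝ) : ℂ)
        + (Complex.I / (2 * (β : ℂ))) * (Real.sin (β * τ) : ℂ) := by push_cast; ring
  rw [e1]
  have hn1 : ‖((Real.cos (β * τ) - Real.cos (c * r * τ) : ℝ) : ℂ)‖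
      = |Real.cos (β * τ) - Real.cos (c * r * τ)| := by
    rw [Complex.norm_real, Real.norm_eq_abs]
  have hn2 : ‖(Complex.I / (2 * (β : ℂ))) * (Real.sin (β * τ) : ℂ)‖ ≤ 1 / (2 * β) := by
    rw [norm_mul, norm_div, Complex.norm_I]
    have : ‖(2 * (β : ℂ))‖ = 2 * β := by
      rw [norm_mul, Complex.norm_real, Real.norm_eq_abs, abs_of_pos hpos]
      norm_num
    rw [this, Complex.norm_real, Real.norm_eq_abs]
    have : |Real.sin (β * τ)| ≤ 1 := abs_le.2 ⟨Real.neg_one_le_sin _, Real.sin_le_one _⟩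
    calc 1 / (2 * β) * |Real.sin (β * τ)| ≤ 1 / (2 * β) * 1 := by gcongr
      _ = 1 / (2 * β) := by ring
  have hcoseq : Real.cos (c * r * τ) = Real.cos (|c| * r * τ) := by
    rw [show |c| * r * τ = |c * r * τ| by rw [abs_mul, abs_mul, abs_of_pos hr, abs_of_pos hτ],
      Real.cos_abs]
  have hn3 : |Real.cos (β * τ) - Real.cos (c * r * τ)| ≤ τ / (4 * β) := by
    rw [hcoseq]
    calc |Real.cos (β * τ) - Real.cos (|c| * r * τ)| ≤ |β * τ - |c| * r * τ| :=
        cos_lip' _ _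
      _ = (β - |c| * r) * τ := by rw [abs_of_nonneg (by nlinarith)]; ring
      _ ≤ 1 / (4 * β) * τ := by gcongr
      _ = τ / (4 * β) := by ring
  calc ‖((Real.cos (β * τ) - Real.cos (c * r * τ) : ℝ) : ℂ)
        + (Complex.I / (2 * (β : ℂ))) * (Real.sin (β * τ) : ℂ)‖
      ≤ ‖((Real.cos (β * τ) - Real.cos (c * r * τ) : ℝ) : ℂ)‖
        + ‖(Complex.I / (2 * (β : ℂ))) * (Real.sin (β * τ) : ℂ)‖ := norm_add_le _ _
    _ ≤ τ / (4 * β) + 1 / (2 * β) := by rw [hn1]; exact add_le_add hn3 hn2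
    _ = (τ + 2) / (4 * β) := by field_simp; ring

set_option maxHeartbeats 1000000

theorem statement16 (r τ : ℝ) (hr : 0 < r) (hτ : 0 < τ) (hτ' : τ < 2 * Real.pi) :
    Filter.Tendsto
        (fun c : ℝ =>
          (Real.cos (Real.sqrt (c^2*r^2 + 1/4) * τ) : ℂ)
            + (Complex.I / (2 * (Real.sqrt (c^2*r^2 + 1/4) : ℂ)))
              * (Real.sin (Real.sqrt (c^2*r^2 + 1/4) * τ) : ℂ)
            - (Real.cos (c * r * τ) : ℂ))
        (Filter.cocompact ℝ) (nhds 0) ∧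
    Filter.Tendsto
        (fun c : ℝ =>
          (((c * r / Real.sqrt (c^2*r^2 + 1/4)) * Real.sin (Real.sqrt (c^2*r^2 + 1/4) * τ)
            - Real.sin (c * r * τ) : ℝ) : ℂ))
        (Filter.cocompact ℝ) (nhds 0) ∧
    ∀ c : ℝ,
      (Real.cos (Real.sqrt (c^2*r^2 + 1/4) * τ) : ℂ)
          + (Complex.I / (2 * (Real.sqrt (c^2*r^2 + 1/4) : ℂ)))
            * (Real.sin (Real.sqrt (c^2*r^2 + 1/4) * τ) : ℂ)
          - (Real.cos (c * r * τ) : ℂ) ≠ 0 := by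
  have hβtop : Tendsto (fun c : ℝ => Real.sqrt (c^2*r^2 + 1/4)) (cocompact ℝ) atTop := by
    refine tendsto_atTop_mono (fun c => (beta_facts r hr c).2.1) ?_
    have h := (tendsto_norm_cocompact_atTop (E := ℝ)).atTop_mul_const hr
    simpa [Real.norm_eq_abs] using h
  have hg : Tendsto (fun c : ℝ => (τ + 2) / (4 * Real.sqrt (c^2*r^2 + 1/4)))
      (cocompact ℝ) (nhds 0) :=
    tendsto_const_nhds.div_atTop (hβtop.const_mul_atTop (by norm_num))
  refine ⟨?_, ?_, ?_⟩
  · exact squeeze_zero_norm (fun c => ha_bound r τ hr hτ c) hg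
  · refine squeeze_zero_norm (fun c => ?_) hg
    rw [Complex.norm_real, Real.norm_eq_abs]
    set d := |c| with hd
    have hbb : Real.sqrt (c^2*r^2 + 1/4) = Real.sqrt (d^2*r^2 + 1/4) := by rw [hd, sq_abs]
    have key : |c * r / Real.sqrt (c^2*r^2 + 1/4) * Real.sin (Real.sqrt (c^2*r^2 + 1/4) * τ)
        - Real.sin (c * r * τ)|
        = |d * r / Real.sqrt (c^2*r^2 + 1/4) * Real.sin (Real.sqrt (c^2*r^2 + 1/4) * τ)
        - Real.sin (d * r * τ)| := by
      rcases abs_choice c with h | h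
      · rw [hd, h]
      · rw [hd, h]
        have e2 : (-c) * r / Real.sqrt (c^2*r^2 + 1/4) * Real.sin (Real.sqrt (c^2*r^2 + 1/4) * τ)
            - Real.sin ((-c) * r * τ)
            = -(c * r / Real.sqrt (c^2*r^2 + 1/4) * Real.sin (Real.sqrt (c^2*r^2 + 1/4) * τ)
            - Real.sin (c * r * τ)) := by
          rw [show (-c) * r * τ = -(c * r * τ) by ring, Real.sin_neg]; ring
        rw [e2, abs_neg]
    rw [key, hbb]
    have hbnd := hb_bound r τ hr hτ d (hd ▸ abs_nonneg c)
    rw [← hbb] at hbnd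
    rw [← hbb]
    exact hbnd
  · intro c h
    obtain ⟨hpos, hge, hhalf, hsub⟩ := beta_facts r hr c
    set β := Real.sqrt (c^2*r^2 + 1/4) with hβ
    have hsq : β^2 = c^2*r^2 + 1/4 := Real.sq_sqrt (by positivity)
    have hβC : ((β : ℂ)) ≠ 0 := Complex.ofReal_ne_zero.2 hpos.ne'
    have h2 : ((Real.cos (β * τ) * (2*β) - Real.cos (c * r * τ) * (2*β) : ℝ) : ℂ)
        + Complex.I * (Real.sin (β * τ) : ℂ) = 0 := by
      have hI : Complex.I / (2 * (β : ℂ)) * (2 * β) = Complex.I :=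
        div_mul_cancel₀ Complex.I (mul_ne_zero two_ne_zero hβC)
      push_cast at h ⊢
      linear_combination (2 * (β : ℂ)) * h - Complex.sin (β * τ) * hI
    rw [Complex.ext_iff] at h2
    simp only [Complex.add_re, Complex.ofReal_re, Complex.mul_re, Complex.I_re,
      Complex.ofReal_im, Complex.I_im, Complex.add_im, Complex.mul_im, Complex.ofReal_im,
      Complex.zero_re, Complex.zero_im] at h2
    obtain ⟨hre, him⟩ := h2
    have hsinb : Real.sin (β * τ) = 0 := by linarith [him]
    have hcos : Real.cos (β * τ) = Real.cos (c * r * τ) := by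
      have h' : (Real.cos (β * τ) - Real.cos (c * r * τ)) * (2*β) = 0 := by
        linear_combination hre
      rcases mul_eq_zero.1 h' with h'' | h''
      · linarith
      · exfalso; nlinarith
    have hsa : Real.sin (c * r * τ) = 0 := by
      have e1 := Real.sin_sq_add_cos_sq (β * τ)
      have e2 := Real.sin_sq_add_cos_sq (c * r * τ)
      have hc2 : Real.cos (c * r * τ)^2 = Real.cos (β * τ)^2 := by rw [hcos]
      have hs2 : Real.sin (β * τ)^2 = 0 := by rw [hsinb]; ring
      have : Real.sin (c * r * τ)^2 = 0 := by linarith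
      exact pow_eq_zero_iff (two_ne_zero) |>.1 this
    obtain ⟨k, hk⟩ := Real.sin_eq_zero_iff.1 hsinb
    obtain ⟨m, hm⟩ := Real.sin_eq_zero_iff.1 hsa
    clear hβtop hg h him hre
    have hπ := Real.pi_pos
    have hk2 : (k:ℝ)^2 * Real.pi^2 = β^2 * τ^2 := by
      linear_combination ((k:ℝ) * Real.pi + β * τ) * hk
    have hm2 : (m:ℝ)^2 * Real.pi^2 = c^2 * r^2 * τ^2 := by
      linear_combination ((m:ℝ) * Real.pi + c * r * τ) * hm
    have hd : ((k:ℝ)^2 - (m:ℝ)^2) * Real.pi^2 = τ^2/4 := by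
      linear_combination hk2 - hm2 + τ^2 * hsq
    have hττ : τ^2 < 4 * Real.pi^2 := by nlinarith
    have h01 : (0:ℝ) < (k:ℝ)^2 - (m:ℝ)^2 := by nlinarith [mul_pos hπ hπ, mul_pos hτ hτ, hd]
    have h02 : (k:ℝ)^2 - (m:ℝ)^2 < 1 := by nlinarith [mul_pos hπ hπ, hd]
    have hZ1 : (0:ℤ) < k^2 - m^2 := by
      have : ((0:ℤ):ℝ) < ((k^2 - m^2 : ℤ):ℝ) := by push_cast; linarith
      exact_mod_cast this
    have hZ2 : (k^2 - m^2 : ℤ) < 1 := by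
      have : ((k^2 - m^2 : ℤ):ℝ) < ((1:ℤ):ℝ) := by push_cast; linarith
      exact_mod_cast this
    omega
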